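/- Let P_t f(x) = E[f(e^{tA}x + Y_t)] be the Ornstein–Uhlenbeck semigroup on ℝ^d and let f(x) = e^{i⟨h,x⟩}. Then for each x ∈ ℝ^d the map t ↦ P_t f(x) is differentiable on [0,∞) and ∂_t P_t f(x) = L₀(P_t f)(x), where L₀g(x) = ⟨Ax, Dg(x)⟩ + L₁g(x). -/

import Mathlib

open MeasureTheory Filter

variable {d : ℕ}

open Complex ContinuousLinearMap
local notation "E" => EuclideanSpace ℝ (Fin d)

/-- The matrix exponential `e^{tA}`. -/
noncomputable def ouExp (A : EuclideanSpace ℝ (Fin d) →L[ℝ] EuclideanSpace ℝ (Fin d)) (t : ℝ) :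
    EuclideanSpace ℝ (Fin d) →L[ℝ] EuclideanSpace ℝ (Fin d) :=
  NormedSpace.exp (t • A)

/-- The non-local part `L₁` of the Ornstein–Uhlenbeck operator on complex-valued functions. -/
noncomputable def L1c (Q : EuclideanSpace ℝ (Fin d) →L[ℝ] EuclideanSpace ℝ (Fin d))
    (a : EuclideanSpace ℝ (Fin d)) (ν : Measure (EuclideanSpace ℝ (Fin d)))
    (f : EuclideanSpace ℝ (Fin d) → ℂ) (x : EuclideanSpace ℝ (Fin d)) : ℂ :=
  (∫ y, (f (x + y) - f x - (if ‖y‖ ≤ 1 then fderiv ℝ f x y else 0)) ∂ν)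
    + (1 / 2 : ℂ) * ∑ i : Fin d,
        fderiv ℝ (fun z => fderiv ℝ f z (Q (EuclideanSpace.basisFun (Fin d) ℝ i))) x
          (EuclideanSpace.basisFun (Fin d) ℝ i)
    + fderiv ℝ f x a

/-- The Ornstein–Uhlenbeck operator `L₀g(x) = ⟨Ax, Dg(x)⟩ + L₁g(x)`. -/
noncomputable def L0c (A Q : EuclideanSpace ℝ (Fin d) →L[ℝ] EuclideanSpace ℝ (Fin d))
    (a : EuclideanSpace ℝ (Fin d)) (ν : Measure (EuclideanSpace ℝ (Fin d)))
    (f : EuclideanSpace ℝ (Fin d) → ℂ) (x : EuclideanSpace ℝ (Fin d)) : ℂ :=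
  fderiv ℝ f x (A x) + L1c Q a ν f x

/-- The Lévy–Khintchine exponent associated with `(Q, a, ν)`. -/
noncomputable def levyExponent (Q : EuclideanSpace ℝ (Fin d) →L[ℝ] EuclideanSpace ℝ (Fin d))
    (a : EuclideanSpace ℝ (Fin d)) (ν : Measure (EuclideanSpace ℝ (Fin d)))
    (u : EuclideanSpace ℝ (Fin d)) : ℂ :=
  (1 / 2 : ℂ) * ((inner ℝ (Q u) u : ℝ) : ℂ) - Complex.I * ((inner ℝ a u : ℝ) : ℂ)
    - ∫ y, (Complex.exp (Complex.I * ((inner ℝ u y : ℝ) : ℂ)) - 1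
        - (if ‖y‖ ≤ 1 then Complex.I * ((inner ℝ u y : ℝ) : ℂ) else 0)) ∂ν

lemma charHasFDerivAt (u x : E) (C : ℂ) :
    HasFDerivAt (fun z : E => Complex.exp (Complex.I * ((inner ℝ u z : ℝ) : ℂ)) * C)
      ((Complex.exp (Complex.I * ((inner ℝ u x : ℝ) : ℂ)) * C) •
        (Complex.I • ((Complex.ofRealCLM : ℝ →L[ℝ] ℂ).comp (innerSL ℝ u)))) x := by
  have h1 : HasFDerivAt (fun z : E => ((inner ℝ u z : ℝ) : ℂ))
      ((Complex.ofRealCLM : ℝ →L[ℝ] ℂ).comp (innerSL ℝ u)) x :=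
    ((Complex.ofRealCLM : ℝ →L[ℝ] ℂ).comp (innerSL ℝ u)).hasFDerivAt
  have h2 := (h1.const_mul Complex.I).cexp.mul_const C
  refine h2.congr_fderiv ?_
  ext v
  simp [mul_comm, mul_assoc, mul_left_comm]

lemma charFderiv_apply (u x v : E) (C : ℂ) :
    fderiv ℝ (fun z : E => Complex.exp (Complex.I * ((inner ℝ u z : ℝ) : ℂ)) * C) x v
      = Complex.I * ((inner ℝ u v : ℝ) : ℂ) *
        (Complex.exp (Complex.I * ((inner ℝ u x : ℝ) : ℂ)) * C) := by
  rw [(charHasFDerivAt u x C).fderiv]; simp; ring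

lemma charFderiv2_apply (u x v w : E) (C : ℂ) :
    fderiv ℝ (fun z : E =>
        fderiv ℝ (fun z' : E => Complex.exp (Complex.I * ((inner ℝ u z' : ℝ) : ℂ)) * C) z w) x v
      = Complex.I * ((inner ℝ u v : ℝ) : ℂ) * (Complex.I * ((inner ℝ u w : ℝ) : ℂ)) *
        (Complex.exp (Complex.I * ((inner ℝ u x : ℝ) : ℂ)) * C) := by
  have : (fun z : E =>
      fderiv ℝ (fun z' : E => Complex.exp (Complex.I * ((inner ℝ u z' : ℝ) : ℂ)) * C) z w)
      = fun z : E => Complex.exp (Complex.I * ((inner ℝ u z : ℝ) : ℂ)) *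
          (Complex.I * ((inner ℝ u w : ℝ) : ℂ) * C) := by
    funext z; rw [charFderiv_apply]; ring
  rw [this, charFderiv_apply]; ring

lemma sum_inner_Q (Q : E →L[ℝ] E) (hQsym : IsSelfAdjoint Q) (u : E) :
    ∑ i : Fin d, ((inner ℝ u (Q (EuclideanSpace.basisFun (Fin d) ℝ i)) : ℝ)
      * (inner ℝ u (EuclideanSpace.basisFun (Fin d) ℝ i) : ℝ))
      = (inner ℝ (Q u) u : ℝ) := by
  have hsym := (ContinuousLinearMap.isSelfAdjoint_iff_isSymmetric.mp hQsym)
  have h2 : ∀ v : E, (inner ℝ u (Q v) : ℝ) = inner ℝ (Q u) v := fun v => (hsym u v).symm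
  calc ∑ i : Fin d, ((inner ℝ u (Q (EuclideanSpace.basisFun (Fin d) ℝ i)) : ℝ)
      * (inner ℝ u (EuclideanSpace.basisFun (Fin d) ℝ i) : ℝ))
      = ∑ i : Fin d, ((inner ℝ (Q u) (EuclideanSpace.basisFun (Fin d) ℝ i) : ℝ)
      * (inner ℝ (EuclideanSpace.basisFun (Fin d) ℝ i) u : ℝ)) := by
        refine Finset.sum_congr rfl fun i _ => ?_
        rw [h2, real_inner_comm u]
    _ = (inner ℝ (Q u) u : ℝ) :=
      (EuclideanSpace.basisFun (Fin d) ℝ).sum_inner_mul_inner _ _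

lemma L0c_char (A Q : E →L[ℝ] E) (a : E) (ν : Measure E) (hQsym : IsSelfAdjoint Q)
    (u x : E) (C : ℂ) :
    L0c A Q a ν (fun z : E => Complex.exp (Complex.I * ((inner ℝ u z : ℝ) : ℂ)) * C) x
      = (Complex.I * ((inner ℝ u (A x) : ℝ) : ℂ) - levyExponent Q a ν u) *
        (Complex.exp (Complex.I * ((inner ℝ u x : ℝ) : ℂ)) * C) := by
  set fx := Complex.exp (Complex.I * ((inner ℝ u x : ℝ) : ℂ)) * C with hfx
  have hint : (∫ y, ((fun z : E => Complex.exp (Complex.I * ((inner ℝ u z : ℝ) : ℂ)) * C) (x + y)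
        - fx - (if ‖y‖ ≤ 1 then
          fderiv ℝ (fun z : E => Complex.exp (Complex.I * ((inner ℝ u z : ℝ) : ℂ)) * C) x y
          else 0)) ∂ν)
      = fx * ∫ y, (Complex.exp (Complex.I * ((inner ℝ u y : ℝ) : ℂ)) - 1
        - (if ‖y‖ ≤ 1 then Complex.I * ((inner ℝ u y : ℝ) : ℂ) else 0)) ∂ν := by
    rw [← integral_const_mul]
    congr 1; funext y
    rw [charFderiv_apply]
    have : (inner ℝ u (x + y) : ℝ) = inner ℝ u x + inner ℝ u y := inner_add_right u x y
    simp only [this, Complex.ofReal_add, mul_add, Complex.exp_add, hfx]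
    by_cases hy : ‖y‖ ≤ 1 <;> simp [hy] <;> ring
  have hsum : ∑ i : Fin d,
      fderiv ℝ (fun z => fderiv ℝ
        (fun z' : E => Complex.exp (Complex.I * ((inner ℝ u z' : ℝ) : ℂ)) * C) z
        (Q (EuclideanSpace.basisFun (Fin d) ℝ i))) x (EuclideanSpace.basisFun (Fin d) ℝ i)
      = -((inner ℝ (Q u) u : ℝ) : ℂ) * fx := by
    have : ∀ i : Fin d,
        fderiv ℝ (fun z => fderiv ℝ
          (fun z' : E => Complex.exp (Complex.I * ((inner ℝ u z' : ℝ) : ℂ)) * C) z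
          (Q (EuclideanSpace.basisFun (Fin d) ℝ i))) x (EuclideanSpace.basisFun (Fin d) ℝ i)
        = -(((inner ℝ u (Q (EuclideanSpace.basisFun (Fin d) ℝ i)) : ℝ)
            * (inner ℝ u (EuclideanSpace.basisFun (Fin d) ℝ i) : ℝ) : ℝ)) * fx := by
      intro i
      rw [charFderiv2_apply]
      push_cast
      linear_combination (((inner ℝ u (Q (EuclideanSpace.basisFun (Fin d) ℝ i)) : ℝ) : ℂ)
        * ((inner ℝ u (EuclideanSpace.basisFun (Fin d) ℝ i) : ℝ) : ℂ) * fx) * Complex.I_sq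
    rw [Finset.sum_congr rfl (fun i _ => this i), ← Finset.sum_mul]
    congr 1
    rw [← sum_inner_Q Q hQsym u]
    push_cast
    rw [Finset.sum_neg_distrib]
  rw [L0c, L1c, hint, hsum, charFderiv_apply, charFderiv_apply, levyExponent,
    real_inner_comm a u]
  push_cast
  ring

lemma levy_kernel_bound (v y : E) (R : ℝ) (hR : 1 ≤ R) (hv : ‖v‖ ≤ R) :
    ‖Complex.exp (Complex.I * ((inner ℝ v y : ℝ) : ℂ)) - 1
      - (if ‖y‖ ≤ 1 then Complex.I * ((inner ℝ v y : ℝ) : ℂ) else 0)‖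
    ≤ ((2 + R) * R ^ 2 + 2) * min 1 (‖y‖ ^ 2) := by
  set θ : ℝ := inner ℝ v y with hθ
  have hθle : |θ| ≤ R * ‖y‖ := by
    calc |θ| ≤ ‖v‖ * ‖y‖ := abs_real_inner_le_norm v y
    _ ≤ R * ‖y‖ := by gcongr
  have hnormI : ‖Complex.I * (θ : ℂ)‖ = |θ| := by
    simp
  have hexp1 : ‖Complex.exp (Complex.I * (θ : ℂ))‖ = 1 := by
    rw [mul_comm]; exact Complex.norm_exp_ofReal_mul_I θ
  have hR0 : (0:ℝ) ≤ R := le_trans zero_le_one hR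
  by_cases hy : ‖y‖ ≤ 1
  · have hmin : min 1 (‖y‖ ^ 2) = ‖y‖ ^ 2 := min_eq_right (by nlinarith [norm_nonneg y])
    rw [if_pos hy, hmin]
    have key : ‖Complex.exp (Complex.I * (θ : ℂ)) - 1 - Complex.I * (θ : ℂ)‖ ≤ (2 + R) * θ ^ 2 := by
      by_cases hθ1 : |θ| ≤ 1
      · have := Complex.norm_exp_sub_one_sub_id_le (x := Complex.I * (θ : ℂ)) (by
          rw [hnormI]; exact hθ1)
        rw [hnormI] at this
        calc ‖Complex.exp (Complex.I * (θ : ℂ)) - 1 - Complex.I * (θ : ℂ)‖ ≤ |θ| ^ 2 := this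
        _ = θ ^ 2 := _root_.sq_abs θ
        _ ≤ (2 + R) * θ ^ 2 := by nlinarith [sq_nonneg θ]
      · push_neg at hθ1
        have h1 : ‖Complex.exp (Complex.I * (θ : ℂ)) - 1 - Complex.I * (θ : ℂ)‖
            ≤ 1 + 1 + |θ| := by
          calc ‖Complex.exp (Complex.I * (θ : ℂ)) - 1 - Complex.I * (θ : ℂ)‖
              ≤ ‖Complex.exp (Complex.I * (θ : ℂ)) - 1‖ + ‖Complex.I * (θ : ℂ)‖ :=
                norm_sub_le _ _
          _ ≤ ‖Complex.exp (Complex.I * (θ : ℂ))‖ + ‖(1:ℂ)‖ + ‖Complex.I * (θ : ℂ)‖ := by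
                gcongr; exact norm_sub_le _ _
          _ = 1 + 1 + |θ| := by rw [hexp1, hnormI, norm_one]
        have hθR : |θ| ≤ R := le_trans hθle (by nlinarith [norm_nonneg y])
        have : 1 + 1 + |θ| ≤ (2 + R) * θ ^ 2 := by nlinarith [_root_.sq_abs θ, abs_nonneg θ]
        linarith
    calc ‖Complex.exp (Complex.I * (θ : ℂ)) - 1 - Complex.I * (θ : ℂ)‖ ≤ (2 + R) * θ ^ 2 := key
    _ ≤ (2 + R) * (R ^ 2 * ‖y‖ ^ 2) := by
        have : θ ^ 2 ≤ R ^ 2 * ‖y‖ ^ 2 := by nlinarith [_root_.sq_abs θ, abs_nonneg θ, norm_nonneg y]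
        nlinarith
    _ ≤ ((2 + R) * R ^ 2 + 2) * ‖y‖ ^ 2 := by nlinarith [norm_nonneg y, sq_nonneg (‖y‖)]
  · push_neg at hy
    have hmin : min 1 (‖y‖ ^ 2) = 1 := min_eq_left (by nlinarith)
    rw [if_neg (not_le.mpr hy), hmin, sub_zero]
    calc ‖Complex.exp (Complex.I * (θ : ℂ)) - 1‖
        ≤ ‖Complex.exp (Complex.I * (θ : ℂ))‖ + ‖(1:ℂ)‖ := norm_sub_le _ _
    _ = 2 := by rw [hexp1, norm_one]; norm_num
    _ ≤ ((2 + R) * R ^ 2 + 2) * 1 := by nlinarith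


lemma levy_integral_continuous (ν : Measure E)
    (hνint : Integrable (fun y => min 1 (‖y‖ ^ 2)) ν) :
    Continuous (fun v : E => ∫ y, (Complex.exp (Complex.I * ((inner ℝ v y : ℝ) : ℂ)) - 1
      - (if ‖y‖ ≤ 1 then Complex.I * ((inner ℝ v y : ℝ) : ℂ) else 0)) ∂ν) := by
  rw [continuous_iff_continuousAt]
  intro v₀
  set R : ℝ := ‖v₀‖ + 1 with hR
  have hR1 : 1 ≤ R := by have := norm_nonneg v₀; simp only [hR]; linarith
  have hcont2 : ∀ w : E, Continuous
      (fun y : E => Complex.exp (Complex.I * ((inner ℝ w y : ℝ) : ℂ))) := fun w =>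
    Complex.continuous_exp.comp (continuous_const.mul
      (Complex.continuous_ofReal.comp (Continuous.inner continuous_const continuous_id)))
  apply MeasureTheory.continuousAt_of_dominated
    (bound := fun y => ((2 + R) * R ^ 2 + 2) * min 1 (‖y‖ ^ 2))
  · filter_upwards with v
    apply Measurable.aestronglyMeasurable
    refine ((hcont2 v).measurable.sub measurable_const).sub
      (Measurable.ite (measurableSet_le measurable_norm measurable_const) ?_ measurable_const)
    exact (continuous_const.mul
      (Complex.continuous_ofReal.comp (Continuous.inner continuous_const continuous_id))).measurable
  · have hball : Metric.ball v₀ 1 ∈ nhds v₀ := Metric.ball_mem_nhds v₀ one_pos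
    filter_upwards [hball] with v hv
    filter_upwards with y
    refine levy_kernel_bound v y R hR1 ?_
    have h1 := mem_ball_iff_norm.mp hv
    have h2 := norm_sub_norm_le v v₀
    simp only [hR]; linarith
  · exact hνint.const_mul _
  · filter_upwards with y
    have hc1 : Continuous (fun v : E => Complex.exp (Complex.I * ((inner ℝ v y : ℝ) : ℂ))) :=
      Complex.continuous_exp.comp (continuous_const.mul
        (Complex.continuous_ofReal.comp (Continuous.inner continuous_id continuous_const)))
    have hc2 : Continuous (fun v : E =>
        (if ‖y‖ ≤ 1 then Complex.I * ((inner ℝ v y : ℝ) : ℂ) else 0)) := by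
      by_cases hy : ‖y‖ ≤ 1
      · simp only [if_pos hy]
        exact continuous_const.mul
          (Complex.continuous_ofReal.comp (Continuous.inner continuous_id continuous_const))
      · simp only [if_neg hy]; exact continuous_const
    exact (((hc1.sub continuous_const).sub hc2)).continuousAt

lemma ouExp_continuous (B : E →L[ℝ] E) (h : E) :
    Continuous (fun s : ℝ => ouExp B s h) := by
  have h1 : Continuous (fun s : ℝ => NormedSpace.exp (s • B)) :=
    continuous_iff_continuousAt.2 fun s => (hasDerivAt_exp_smul_const' B s).continuousAt
  exact (ContinuousLinearMap.apply ℝ (EuclideanSpace ℝ (Fin d)) h).continuous.comp h1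

lemma ouExp_hasDerivAt (B : E →L[ℝ] E) (h : E) (t : ℝ) :
    HasDerivAt (fun s : ℝ => ouExp B s h) (B (ouExp B t h)) t := by
  have h1 : HasDerivAt (fun s : ℝ => NormedSpace.exp (s • B))
      (B * NormedSpace.exp (t • B)) t := hasDerivAt_exp_smul_const' B t
  have h2 := h1.clm_apply (hasDerivAt_const t h)
  simp at h2; exact h2


/-- for `f(x) = e^{i⟨h,x⟩}`, the map `t ↦ P_t f(x)` is differentiable on
`[0,∞)` with `∂_t P_t f(x) = L₀(P_t f)(x)`, where
`P_t f(x) = e^{i⟨e^{tA*}h, x⟩} exp(−∫_0^t ψ(e^{sA*}h) ds)`. -/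
theorem ou_semigroup_deriv_exponential
    (A Q : EuclideanSpace ℝ (Fin d) →L[ℝ] EuclideanSpace ℝ (Fin d))
    (a : EuclideanSpace ℝ (Fin d)) (ν : Measure (EuclideanSpace ℝ (Fin d)))
    (hQsym : IsSelfAdjoint Q) (hQpos : ∀ u, 0 ≤ (inner ℝ (Q u) u : ℝ))
    (hν0 : ν {0} = 0)
    (hνint : Integrable (fun y => min 1 (‖y‖ ^ 2)) ν)
    (h : EuclideanSpace ℝ (Fin d))
    -- P_t f for f = e^{i⟨h,·⟩}, given by the characteristic-function formula
    (P : ℝ → EuclideanSpace ℝ (Fin d) → ℂ)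
    (hP : ∀ t : ℝ, 0 ≤ t → ∀ x,
      P t x = Complex.exp (Complex.I *
          ((inner ℝ (ouExp (ContinuousLinearMap.adjoint A) t h) x : ℝ) : ℂ)) *
        Complex.exp (- ∫ s in (0:ℝ)..t,
          levyExponent Q a ν (ouExp (ContinuousLinearMap.adjoint A) s h))) :
    ∀ t : ℝ, 0 ≤ t → ∀ x,
      HasDerivWithinAt (fun τ => P τ x) (L0c A Q a ν (P t) x) (Set.Ici 0) t := by
  intro t ht x
  set B := ContinuousLinearMap.adjoint A with hB
  have hψcont : Continuous (fun s : ℝ => levyExponent Q a ν (ouExp B s h)) := by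
    have h1 : Continuous (fun v : EuclideanSpace ℝ (Fin d) => levyExponent Q a ν v) := by
      unfold levyExponent
      refine Continuous.sub (Continuous.sub ?_ ?_) (levy_integral_continuous ν hνint)
      · exact continuous_const.mul (Complex.continuous_ofReal.comp
          (Continuous.inner (Q.continuous.comp continuous_id) continuous_id))
      · exact continuous_const.mul (Complex.continuous_ofReal.comp
          (Continuous.inner continuous_const continuous_id))
    exact h1.comp (ouExp_continuous B h)
  have hFTC : HasDerivAt (fun τ : ℝ => ∫ s in (0:ℝ)..τ, levyExponent Q a ν (ouExp B s h))
      (levyExponent Q a ν (ouExp B t h)) t :=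
    (hψcont.integral_hasStrictDerivAt 0 t).hasDerivAt
  have hE2 : HasDerivAt (fun τ : ℝ =>
      Complex.exp (- ∫ s in (0:ℝ)..τ, levyExponent Q a ν (ouExp B s h)))
      (Complex.exp (- ∫ s in (0:ℝ)..t, levyExponent Q a ν (ouExp B s h)) *
        (- levyExponent Q a ν (ouExp B t h))) t := hFTC.neg.cexp
  have hIn : HasDerivAt (fun τ : ℝ => (inner ℝ (ouExp B τ h) x : ℝ))
      (inner ℝ (B (ouExp B t h)) x) t := by
    have := (ouExp_hasDerivAt B h t).inner ℝ (hasDerivAt_const t x)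
    simpa using this
  have hE1 : HasDerivAt (fun τ : ℝ =>
      Complex.exp (Complex.I * ((inner ℝ (ouExp B τ h) x : ℝ) : ℂ)))
      (Complex.exp (Complex.I * ((inner ℝ (ouExp B t h) x : ℝ) : ℂ)) *
        (Complex.I * ((inner ℝ (B (ouExp B t h)) x : ℝ) : ℂ))) t :=
    ((hIn.ofReal_comp).const_mul Complex.I).cexp
  have hg := hE1.mul hE2
  have hkey : HasDerivAt (fun τ : ℝ =>
      Complex.exp (Complex.I * ((inner ℝ (ouExp B τ h) x : ℝ) : ℂ)) *
        Complex.exp (- ∫ s in (0:ℝ)..τ, levyExponent Q a ν (ouExp B s h)))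
      ((Complex.I * ((inner ℝ (ouExp B t h) (A x) : ℝ) : ℂ)
          - levyExponent Q a ν (ouExp B t h)) *
        (Complex.exp (Complex.I * ((inner ℝ (ouExp B t h) x : ℝ) : ℂ)) *
        Complex.exp (- ∫ s in (0:ℝ)..t, levyExponent Q a ν (ouExp B s h)))) t := by
    refine hg.congr_deriv ?_
    have hadj : (inner ℝ (B (ouExp B t h)) x : ℝ) = inner ℝ (ouExp B t h) (A x) := by
      rw [hB]; exact ContinuousLinearMap.adjoint_inner_left A x (ouExp B t h)
    rw [← hadj]
    ring
  have hPt : P t = fun z => Complex.exp (Complex.I * ((inner ℝ (ouExp B t h) z : ℝ) : ℂ)) *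
      Complex.exp (- ∫ s in (0:ℝ)..t, levyExponent Q a ν (ouExp B s h)) :=
    funext fun z => hP t ht z
  have hL : L0c A Q a ν (P t) x
      = (Complex.I * ((inner ℝ (ouExp B t h) (A x) : ℝ) : ℂ)
          - levyExponent Q a ν (ouExp B t h)) *
        (Complex.exp (Complex.I * ((inner ℝ (ouExp B t h) x : ℝ) : ℂ)) *
        Complex.exp (- ∫ s in (0:ℝ)..t, levyExponent Q a ν (ouExp B s h))) := by
    rw [hPt]
    exact L0c_char A Q a ν hQsym (ouExp B t h) x _
  rw [hL]
  exact (hkey.hasDerivWithinAt).congr (fun y hy => hP y hy x) (hP t ht x)
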